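/- Let p be a prime number and let π, ρ, τ be monic polynomials over 𝕃_p, each of degree at least 1, such that π = ρ · τ. Then π is expansive if and only if both ρ and τ are expansive. -/

import Mathlib

open LaurentPolynomial
open scoped Classical

/-- `𝕃 m`: Laurent polynomials over `ℤ/mℤ`. -/
abbrev Lm (m : ℕ) := LaurentPolynomial (ZMod m)

/-- `deg⁺` of a Laurent polynomial: the max of its support (`⊥ = -∞` for `0`). -/
noncomputable def degP {m : ℕ} (α : Lm m) : WithBot ℤ := (AddMonoidAlgebra.coeff α).support.max

/-- `deg⁻` of a Laurent polynomial: the min of its support (`⊤ = +∞` for `0`). -/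
noncomputable def degM {m : ℕ} (α : Lm m) : WithTop ℤ := (AddMonoidAlgebra.coeff α).support.min

/-- A monic polynomial `π(t) = α₀ + α₁ t + ⋯ + α_{n-1} t^{n-1} + tⁿ` over `𝕃 m`
is *expansive* if `α₀ ≠ 0`, `deg⁺(α₀) > 0`, `deg⁺(α₀) > deg⁺(αᵢ)`,
`deg⁻(α₀) < 0` and `deg⁻(α₀) < deg⁻(αᵢ)` for all `1 ≤ i ≤ n-1`. -/
def ExpansivePoly {m : ℕ} (π : Polynomial (Lm m)) : Prop :=
  π.coeff 0 ≠ 0 ∧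
  ((0 : WithBot ℤ) < degP (π.coeff 0) ∧
    ∀ i : ℕ, 1 ≤ i → i < π.natDegree → degP (π.coeff i) < degP (π.coeff 0)) ∧
  (degM (π.coeff 0) < (0 : WithTop ℤ) ∧
    ∀ i : ℕ, 1 ≤ i → i < π.natDegree → degM (π.coeff 0) < degM (π.coeff i))

/-- A matrix over `𝕃 m` is expansive if its characteristic polynomial is. -/
noncomputable def ExpansiveMatrix {m n : ℕ} (A : Matrix (Fin n) (Fin n) (Lm m)) : Prop :=
  ExpansivePoly A.charpoly

/-- The Tychonoff distance on the configuration space `(ℤ → S)`. -/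
noncomputable def tdist {S : Type*} (c c' : ℤ → S) : ℝ :=
  if c = c' then 0
  else (2 : ℝ) ^ (-((sInf {k : ℕ | ∃ j : ℤ, j.natAbs = k ∧ c j ≠ c' j} : ℕ) : ℤ))

/-- A map on the configuration space is positively expansive if for some `ε > 0`
any two distinct configurations are eventually `≥ ε` apart. -/
def PosExpansive {S : Type*} (F : (ℤ → S) → (ℤ → S)) : Prop :=
  ∃ ε : ℝ, 0 < ε ∧ ∀ c c' : ℤ → S, c ≠ c' →
    ∃ ℓ : ℕ, ε ≤ tdist (F^[ℓ] c) (F^[ℓ] c')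

/-- The linear CA over `(ℤ/mℤ)ⁿ` determined by a matrix `A ∈ 𝕃_m^{n×n}`:
`F_A(c)_i = ∑_{k ∈ ℤ} A⁽ᵏ⁾ · c_{i-k}` where `A⁽ᵏ⁾` is the coefficient matrix of `Xᵏ` in `A`.
The same formula gives the action of `A` on two-sided formal power series `𝕊_m^n`. -/
noncomputable def lcaFun {m n : ℕ} (A : Matrix (Fin n) (Fin n) (Lm m)) :
    (ℤ → Fin n → ZMod m) → (ℤ → Fin n → ZMod m) :=
  fun c i a => ∑ b, Finsupp.sum (AddMonoidAlgebra.coeff (A a b)) (fun k coef => coef * c (i - k) b)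

/-- `Left(𝕊ⁿ_m, s)`: two-sided series with `deg⁺ = s`. -/
def SLeft {V : Type*} [Zero V] (s : ℤ) : Set (ℤ → V) :=
  {υ | (∀ j : ℤ, s < j → υ j = 0) ∧ υ s ≠ 0}

/-- `Left*(𝕊ⁿ_m, s)`: two-sided series with `deg⁺ ≤ s`. -/
def SLeftStar {V : Type*} [Zero V] (s : ℤ) : Set (ℤ → V) :=
  {υ | ∀ j : ℤ, s < j → υ j = 0}

/-- `Right(𝕊ⁿ_m, s)`: two-sided series with `deg⁻ = s`. -/
def SRight {V : Type*} [Zero V] (s : ℤ) : Set (ℤ → V) :=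
  {υ | (∀ j : ℤ, j < s → υ j = 0) ∧ υ s ≠ 0}

/-- `Right*(𝕊ⁿ_m, s)`: two-sided series with `deg⁻ ≥ s`. -/
def SRightStar {V : Type*} [Zero V] (s : ℤ) : Set (ℤ → V) :=
  {υ | ∀ j : ℤ, j < s → υ j = 0}

/-- Reduction of a Laurent polynomial over `ℤ/mℤ` modulo `q` (for `q ∣ m`). -/
noncomputable def lmod {m q : ℕ} (h : q ∣ m) (α : Lm m) : Lm q :=
  AddMonoidAlgebra.ofCoeff (Finsupp.mapRange (ZMod.castHom h (ZMod q)) (map_zero _) (AddMonoidAlgebra.coeff α))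

/-- Entrywise reduction of a matrix of Laurent polynomials modulo `q`. -/
noncomputable def matMod {m q n : ℕ} (h : q ∣ m) (B : Matrix (Fin n) (Fin n) (Lm m)) :
    Matrix (Fin n) (Fin n) (Lm q) :=
  fun a b => lmod h (B a b)

/-- `deg⁺` on the field of fractions of `𝕃 p`: `deg⁺(α/β) = deg⁺(α) - deg⁺(β)`,
computed on a representation given by `IsLocalization.sec`; `deg⁺ 0 = ⊥`. -/
noncomputable def degPF {p : ℕ} (φ : FractionRing (Lm p)) : WithBot ℤ :=
  if φ = 0 then ⊥
  else ((WithBot.unbotD 0 (degP ((IsLocalization.sec (nonZeroDivisors (Lm p)) φ).1))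
        - WithBot.unbotD 0 (degP (((IsLocalization.sec (nonZeroDivisors (Lm p)) φ).2 : Lm p))) : ℤ) : WithBot ℤ)

/-- The `(x, y)` entry (with `ℕ`-indices) of the companion matrix of a polynomial `π`
viewed as a `d × d` matrix: subdiagonal entries `1`,
last column `(-π.coeff 0, …, -π.coeff (d-1))ᵀ`, the rest `0`. -/
def companionEntry {R : Type*} [CommRing R] (d : ℕ) (π : Polynomial R) (x y : ℕ) : R :=
  if y = d - 1 then -π.coeff x else if x = y + 1 then 1 else 0

/-- The companion matrix (as a `d × d` matrix) of a polynomial `π`. -/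
def companionMatrix {R : Type*} [CommRing R] (d : ℕ) (π : Polynomial R) :
    Matrix (Fin d) (Fin d) R :=
  fun a b => companionEntry d π a b

/-- A matrix is in rational canonical form if it is block diagonal with blocks the
companion matrices of monic polynomials `π₁, …, π_s` of degree at least one with
`πᵢ ∣ πⱼ` for `i ≤ j`.  The blocks are described by the offsets `off i` of their
top-left corners. -/
def IsRCF {R : Type*} [CommRing R] {n : ℕ} (C : Matrix (Fin n) (Fin n) R) : Prop :=
  ∃ (s : ℕ) (π : Fin s → Polynomial R) (off : Fin (s + 1) → ℕ),
    (∀ i, (π i).Monic) ∧ (∀ i, 1 ≤ (π i).natDegree) ∧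
    (∀ i j, i ≤ j → π i ∣ π j) ∧
    off 0 = 0 ∧ off (Fin.last s) = n ∧
    (∀ i : Fin s, off i.succ = off i.castSucc + (π i).natDegree) ∧
    (∀ (i : Fin s) (a b : Fin n),
      off i.castSucc ≤ (a : ℕ) → (a : ℕ) < off i.succ →
      off i.castSucc ≤ (b : ℕ) → (b : ℕ) < off i.succ →
      C a b = companionEntry (π i).natDegree (π i)
        ((a : ℕ) - off i.castSucc) ((b : ℕ) - off i.castSucc)) ∧
    (∀ a b : Fin n,
      (∀ i : Fin s, ¬(off i.castSucc ≤ (a : ℕ) ∧ (a : ℕ) < off i.succ ∧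
        off i.castSucc ≤ (b : ℕ) ∧ (b : ℕ) < off i.succ)) → C a b = 0)



section Abstract

variable {R : Type*} [CommRing R]

/-- Abstract "max-degree" function axioms. -/
structure DegLike (D : R → WithBot ℤ) : Prop where
  bot_iff : ∀ a : R, D a = ⊥ ↔ a = 0
  one : D 1 = 0
  mul : ∀ a b : R, D (a * b) = D a + D b
  add_le : ∀ a b : R, D (a + b) ≤ max (D a) (D b)

namespace DegLike

variable {D : R → WithBot ℤ}

lemma zero (hD : DegLike D) : D 0 = ⊥ := (hD.bot_iff 0).2 rfl

lemma neg_one (hD : DegLike D) : D (-1 : R) = 0 := by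
  have h : D (-1 : R) + D (-1 : R) = 0 := by
    rw [← hD.mul]; norm_num [hD.one]
  rcases hx : D (-1 : R) with _ | n
  · rw [hx, WithBot.none_eq_bot] at h; simp at h
  · rw [hx, WithBot.some_eq_coe, ← WithBot.coe_add] at h
    have hn : n + n = 0 := by exact_mod_cast h
    have : n = 0 := by omega
    rw [WithBot.some_eq_coe, this]; rfl

lemma neg (hD : DegLike D) (a : R) : D (-a) = D a := by
  have : D (-a) = D (-1 * a) := by ring_nf
  rw [this, hD.mul, hD.neg_one, zero_add]

/-- Ultrametric dominance: the degree of a sum with one strictly dominant term. -/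
lemma dom (hD : DegLike D) {a b : R} (h : D b < D a) : D (a + b) = D a := by
  refine le_antisymm ((hD.add_le a b).trans_eq (max_eq_left h.le)) ?_
  have h2 : D a ≤ max (D (a + b)) (D b) := by
    have : a = (a + b) + (-b) := by ring
    calc D a = D ((a + b) + -b) := by rw [← this]
    _ ≤ max (D (a + b)) (D (-b)) := hD.add_le _ _
    _ = max (D (a + b)) (D b) := by rw [hD.neg]
  rcases max_cases (D (a + b)) (D b) with ⟨he, _⟩ | ⟨he, hlt⟩
  · rwa [he] at h2
  · rw [he] at h2; exact absurd (h2.trans_lt h) (lt_irrefl _)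

lemma sum_le (hD : DegLike D) {ι : Type*} (s : Finset ι) (F : ι → R) :
    D (∑ i ∈ s, F i) ≤ s.sup fun i => D (F i) := by
  classical
  induction s using Finset.cons_induction with
  | empty => simp [hD.zero]
  | cons a s ha ih =>
    rw [Finset.sum_cons, Finset.sup_cons]
    exact (hD.add_le _ _).trans (max_le_max le_rfl ih)

lemma sum_dom (hD : DegLike D) {ι : Type*} {s : Finset ι} {F : ι → R} {a : ι} (ha : a ∈ s)
    {c : WithBot ℤ} (hc : ⊥ < c) (hda : D (F a) = c)
    (hothers : ∀ b ∈ s, b ≠ a → D (F b) < c) :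
    D (∑ i ∈ s, F i) = c := by
  classical
  rw [← Finset.add_sum_erase s F ha]
  have hrest : D (∑ i ∈ s.erase a, F i) < c := by
    refine lt_of_le_of_lt (hD.sum_le _ _) ?_
    rw [Finset.sup_lt_iff hc]
    intro b hb
    exact hothers b (Finset.mem_of_mem_erase hb) (Finset.ne_of_mem_erase hb)
  rw [hD.dom (hda ▸ hrest), hda]

end DegLike

/-- The expansiveness condition relative to an abstract degree function. -/
def DCond {R : Type*} [CommRing R] (D : R → WithBot ℤ) (f : Polynomial R) : Prop :=
  ∀ i : ℕ, 1 ≤ i → D (f.coeff i) < D (f.coeff 0)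

end Abstract

section AbstractMain

variable {R : Type*} [CommRing R] {D : R → WithBot ℤ}

lemma DCond.coeff0_pos (hD : DegLike D) {g : Polynomial R} (hg : g.Monic)
    (hgd : 1 ≤ g.natDegree) (cg : DCond D g) : 0 < D (g.coeff 0) := by
  have := cg g.natDegree hgd
  rwa [hg.coeff_natDegree, hD.one] at this

lemma DCond.coeff_le (hD : DegLike D) {g : Polynomial R} (cg : DCond D g) :
    ∀ j : ℕ, D (g.coeff j) ≤ D (g.coeff 0) := by
  intro j
  rcases Nat.eq_zero_or_pos j with rfl | hj
  · exact le_rfl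
  · exact (cg j hj).le

lemma DCond.mul (hD : DegLike D) {g h : Polynomial R} (hg : g.Monic) (hh : h.Monic)
    (hgd : 1 ≤ g.natDegree) (hhd : 1 ≤ h.natDegree)
    (cg : DCond D g) (ch : DCond D h) : DCond D (g * h) := by
  have hg0 := cg.coeff0_pos hD hg hgd
  have hh0 := ch.coeff0_pos hD hh hhd
  have hg0b : D (g.coeff 0) ≠ ⊥ := fun hb => by rw [hb] at hg0; exact absurd hg0 (by simp)
  have hh0b : D (h.coeff 0) ≠ ⊥ := fun hb => by rw [hb] at hh0; exact absurd hh0 (by simp)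
  intro k hk
  rw [Polynomial.coeff_mul, Polynomial.mul_coeff_zero, hD.mul]
  have hbot : ⊥ < D (g.coeff 0) + D (h.coeff 0) := by
    rw [bot_lt_iff_ne_bot]
    exact WithBot.add_ne_bot.2 ⟨hg0b, hh0b⟩
  refine lt_of_le_of_lt (hD.sum_le _ _) ?_
  rw [Finset.sup_lt_iff hbot]
  rintro ⟨i, j⟩ hmem
  rw [Finset.HasAntidiagonal.mem_antidiagonal] at hmem
  rw [hD.mul]
  rcases Nat.eq_zero_or_pos i with rfl | hi
  · have hj : 1 ≤ j := by omega
    exact WithBot.add_lt_add_of_le_of_lt hg0b le_rfl (ch j hj)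
  · exact lt_of_le_of_lt (by gcongr; exact ch.coeff_le hD j) (WithBot.add_lt_add_right hh0b (cg i hi))

lemma DCond.of_mul_left (hD : DegLike D) {g h : Polynomial R} (hg : g.Monic) (hh : h.Monic)
    (c : DCond D (g * h)) : DCond D g := by
  classical
  by_contra hng
  simp only [DCond, not_forall, not_lt] at hng
  obtain ⟨i0, hi01, hi0⟩ := hng
  -- max degrees
  set Mg := (Finset.range (g.natDegree + 1)).sup (fun i => D (g.coeff i)) with hMgdef
  set Mh := (Finset.range (h.natDegree + 1)).sup (fun i => D (h.coeff i)) with hMhdef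
  have hMg0 : (0 : WithBot ℤ) ≤ Mg := by
    have := Finset.le_sup (f := fun i => D (g.coeff i))
      (Finset.mem_range.2 (Nat.lt_succ_self g.natDegree))
    simp only [hg.coeff_natDegree, hD.one] at this
    exact this
  have hMh0 : (0 : WithBot ℤ) ≤ Mh := by
    have := Finset.le_sup (f := fun i => D (h.coeff i))
      (Finset.mem_range.2 (Nat.lt_succ_self h.natDegree))
    simp only [hh.coeff_natDegree, hD.one] at this
    exact this
  have hMgb : Mg ≠ ⊥ := fun hb => by rw [hb] at hMg0; simp at hMg0
  have hMhb : Mh ≠ ⊥ := fun hb => by rw [hb] at hMh0; simp at hMh0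
  have hgle : ∀ i : ℕ, D (g.coeff i) ≤ Mg := by
    intro i
    rcases le_or_gt i g.natDegree with hle | hlt
    · exact Finset.le_sup (f := fun i => D (g.coeff i))
        (Finset.mem_range.2 (Nat.lt_succ_of_le hle))
    · rw [Polynomial.coeff_eq_zero_of_natDegree_lt hlt, hD.zero]; exact bot_le
  have hhle : ∀ j : ℕ, D (h.coeff j) ≤ Mh := by
    intro j
    rcases le_or_gt j h.natDegree with hle | hlt
    · exact Finset.le_sup (f := fun j => D (h.coeff j))
        (Finset.mem_range.2 (Nat.lt_succ_of_le hle))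
    · rw [Polynomial.coeff_eq_zero_of_natDegree_lt hlt, hD.zero]; exact bot_le
  -- attained indices
  obtain ⟨ag, hagmem, hag⟩ := Finset.exists_mem_eq_sup (Finset.range (g.natDegree + 1))
    (by simp) (fun i => D (g.coeff i))
  obtain ⟨ah, hahmem, hah⟩ := Finset.exists_mem_eq_sup (Finset.range (h.natDegree + 1))
    (by simp) (fun j => D (h.coeff j))
  -- the last attaining indices
  set Sg := (Finset.range (g.natDegree + 1)).filter (fun i => D (g.coeff i) = Mg) with hSgdef
  set Sh := (Finset.range (h.natDegree + 1)).filter (fun j => D (h.coeff j) = Mh) with hShdef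
  have hSgne : Sg.Nonempty := ⟨ag, Finset.mem_filter.2 ⟨hagmem, hag.symm⟩⟩
  have hShne : Sh.Nonempty := ⟨ah, Finset.mem_filter.2 ⟨hahmem, hah.symm⟩⟩
  set Λg := Sg.max' hSgne with hΛgdef
  set Λh := Sh.max' hShne with hΛhdef
  have hΛgS : Λg ∈ Sg := Sg.max'_mem hSgne
  have hΛhS : Λh ∈ Sh := Sh.max'_mem hShne
  have hΛgval : D (g.coeff Λg) = Mg := (Finset.mem_filter.1 hΛgS).2
  have hΛhval : D (h.coeff Λh) = Mh := (Finset.mem_filter.1 hΛhS).2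
  have hgstrict : ∀ i : ℕ, Λg < i → D (g.coeff i) < Mg := by
    intro i hi
    rcases le_or_gt i g.natDegree with hle | hlt
    · refine lt_of_le_of_ne (hgle i) (fun heq => ?_)
      have : i ∈ Sg := Finset.mem_filter.2 ⟨Finset.mem_range.2 (Nat.lt_succ_of_le hle), heq⟩
      exact absurd (Sg.le_max' i this) (by omega)
    · rw [Polynomial.coeff_eq_zero_of_natDegree_lt hlt, hD.zero]
      exact Ne.bot_lt hMgb
  have hhstrict : ∀ j : ℕ, Λh < j → D (h.coeff j) < Mh := by
    intro j hj
    rcases le_or_gt j h.natDegree with hle | hlt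
    · refine lt_of_le_of_ne (hhle j) (fun heq => ?_)
      have : j ∈ Sh := Finset.mem_filter.2 ⟨Finset.mem_range.2 (Nat.lt_succ_of_le hle), heq⟩
      exact absurd (Sh.le_max' j this) (by omega)
    · rw [Polynomial.coeff_eq_zero_of_natDegree_lt hlt, hD.zero]
      exact Ne.bot_lt hMhb
  -- Λg ≥ 1
  have hΛg1 : 1 ≤ Λg := by
    by_contra hΛ
    have hΛ0 : Λg = 0 := by omega
    have h0S : D (g.coeff 0) = Mg := by rw [← hΛ0]; exact hΛgval
    have := hgstrict i0 (by omega)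
    rw [← h0S] at this
    exact absurd (hi0.trans_lt this) (lt_irrefl _)
  -- the key coefficient
  have hkey : D ((g * h).coeff (Λg + Λh)) = Mg + Mh := by
    rw [Polynomial.coeff_mul]
    refine hD.sum_dom (a := (Λg, Λh)) (Finset.HasAntidiagonal.mem_antidiagonal.2 rfl) ?_ ?_ ?_
    · rw [bot_lt_iff_ne_bot]; exact WithBot.add_ne_bot.2 ⟨hMgb, hMhb⟩
    · rw [hD.mul, hΛgval, hΛhval]
    · rintro ⟨i, j⟩ hmem hne
      rw [Finset.HasAntidiagonal.mem_antidiagonal] at hmem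
      rw [hD.mul]
      rcases lt_trichotomy i Λg with hlt | rfl | hgt
      · have : Λh < j := by omega
        exact lt_of_le_of_lt (by gcongr; exact hgle i) (WithBot.add_lt_add_left hMgb (hhstrict j this))
      · have : j = Λh := by omega
        exact absurd (by rw [this]) hne
      · exact lt_of_le_of_lt (by gcongr; exact hhle j) (WithBot.add_lt_add_right hMhb (hgstrict i hgt))
  have hc0 : D ((g * h).coeff 0) ≤ Mg + Mh := by
    rw [Polynomial.mul_coeff_zero, hD.mul]
    exact add_le_add (hgle 0) (hhle 0)
  have := c (Λg + Λh) (by omega)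
  rw [hkey] at this
  exact absurd (hc0.trans_lt this) (lt_irrefl _)

lemma DCond.mul_iff (hD : DegLike D) {g h : Polynomial R} (hg : g.Monic) (hh : h.Monic)
    (hgd : 1 ≤ g.natDegree) (hhd : 1 ≤ h.natDegree) :
    DCond D (g * h) ↔ DCond D g ∧ DCond D h := by
  constructor
  · intro c
    refine ⟨c.of_mul_left hD hg hh, ?_⟩
    rw [mul_comm] at c
    exact c.of_mul_left hD hh hg
  · rintro ⟨cg, ch⟩
    exact cg.mul hD hg hh hgd hhd ch

end AbstractMain


section Concrete
variable {p : ℕ} [Fact p.Prime]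

lemma degP_eq_bot_iff (α : Lm p) : degP α = ⊥ ↔ α = 0 := by
  rw [degP, Finset.max_eq_bot, Finsupp.support_eq_empty, AddMonoidAlgebra.coeff_eq_zero]

lemma degP_one : degP (1 : Lm p) = 0 := by
  rw [degP, AddMonoidAlgebra.one_def, AddMonoidAlgebra.coeff_single, Finsupp.support_single_ne_zero _ one_ne_zero,
    Finset.max_singleton]
  rfl

lemma degM_one : degM (1 : Lm p) = 0 := by
  rw [degM, AddMonoidAlgebra.one_def, AddMonoidAlgebra.coeff_single, Finsupp.support_single_ne_zero _ one_ne_zero,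
    Finset.min_singleton]
  rfl

lemma degP_add_le (α β : Lm p) : degP (α + β) ≤ max (degP α) (degP β) := by
  classical
  apply Finset.max_le
  intro x hx
  rcases Finset.mem_union.1 (Finsupp.support_add hx) with h | h
  · exact le_max_of_le_left (Finset.le_max h)
  · exact le_max_of_le_right (Finset.le_max h)

lemma degP_mul (α β : Lm p) : degP (α * β) = degP α + degP β := by
  classical
  rcases eq_or_ne α 0 with rfl | hα
  · simp [degP]
  rcases eq_or_ne β 0 with rfl | hβ
  · simp [degP]
  have hαs : α.coeff.support.Nonempty :=
    Finsupp.support_nonempty_iff.2 (by rwa [Ne, AddMonoidAlgebra.coeff_eq_zero])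
  have hβs : β.coeff.support.Nonempty :=
    Finsupp.support_nonempty_iff.2 (by rwa [Ne, AddMonoidAlgebra.coeff_eq_zero])
  set a := α.coeff.support.max' hαs with hadef
  set b := β.coeff.support.max' hβs with hbdef
  have hda : degP α = (a : ℤ) := (Finset.coe_max' hαs).symm
  have hdb : degP β = (b : ℤ) := (Finset.coe_max' hβs).symm
  have hαa : α.coeff a ≠ 0 := Finsupp.mem_support_iff.1 (α.coeff.support.max'_mem hαs)
  have hβb : β.coeff b ≠ 0 := Finsupp.mem_support_iff.1 (β.coeff.support.max'_mem hβs)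
  have key : (α * β).coeff (a + b) = α.coeff a * β.coeff b := by
    rw [AddMonoidAlgebra.coeff_mul]
    simp only [Finsupp.sum]
    rw [Finset.sum_eq_single a]
    · rw [Finset.sum_eq_single b]
      · rw [if_pos rfl]
      · intro c hc hne
        have hcb : c ≤ b := Finset.le_max' _ c hc
        rw [if_neg (by omega)]
      · intro hb'
        simp [Finsupp.notMem_support_iff.1 hb']
    · intro c hc hne
      have hca : c ≤ a := Finset.le_max' _ c hc
      refine Finset.sum_eq_zero fun d hd => ?_
      have hdb' : d ≤ b := Finset.le_max' _ d hd
      rw [if_neg (by omega)]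
    · intro ha'
      refine Finset.sum_eq_zero fun d _ => ?_
      simp [Finsupp.notMem_support_iff.1 ha']
  have hne : (α * β).coeff (a + b) ≠ 0 := by
    rw [key]
    exact mul_ne_zero hαa hβb
  have hmem : a + b ∈ (α * β).coeff.support := Finsupp.mem_support_iff.2 hne
  rw [hda, hdb, ← WithBot.coe_add]
  apply le_antisymm
  · apply Finset.max_le
    intro x hx
    have := AddMonoidAlgebra.support_coeff_mul_subset α β hx
    rw [Finset.mem_add] at this
    obtain ⟨y, hy, z, hz, rfl⟩ := this
    have h1 : y ≤ a := Finset.le_max' _ y hy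
    have h2 : z ≤ b := Finset.le_max' _ z hz
    exact_mod_cast (by omega : y + z ≤ a + b)
  · exact Finset.le_max hmem

/-- Negation map from `WithTop ℤ` to `WithBot ℤ`. -/
noncomputable def negT : WithTop ℤ → WithBot ℤ :=
  fun x => WithTop.recTopCoe ⊥ (fun a : ℤ => ((-a : ℤ) : WithBot ℤ)) x

@[simp] lemma negT_top : negT ⊤ = ⊥ := rfl
@[simp] lemma negT_coe (a : ℤ) : negT (a : WithTop ℤ) = ((-a : ℤ) : WithBot ℤ) := rfl

lemma negT_lt_negT {x y : WithTop ℤ} : negT x < negT y ↔ y < x := by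
  induction x using WithTop.recTopCoe with
  | top => induction y using WithTop.recTopCoe <;> simp
  | coe a =>
    induction y using WithTop.recTopCoe with
    | top => simp
    | coe b => simp [WithBot.coe_lt_coe, WithTop.coe_lt_coe]

lemma negT_min (x y : WithTop ℤ) : negT (min x y) = max (negT x) (negT y) := by
  induction x using WithTop.recTopCoe with
  | top => simp
  | coe a =>
    induction y using WithTop.recTopCoe with
    | top => simp
    | coe b =>
      rw [← WithTop.coe_min, negT_coe, negT_coe, negT_coe, ← WithBot.coe_max]
      congr 1
      omega

lemma image_neg_max (s : Finset ℤ) : (s.image fun n => -n).max = negT s.min := by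
  classical
  induction s using Finset.induction_on with
  | empty => simp
  | insert a s ha ih =>
    rw [Finset.image_insert, Finset.max_insert, Finset.min_insert, negT_min, ih, negT_coe]

lemma support_invert (α : Lm p) : (invert α).coeff.support = α.coeff.support.image fun n => -n := by
  ext n
  simp only [Finsupp.mem_support_iff, Finset.mem_image]
  constructor
  · intro h
    refine ⟨-n, ?_, by ring⟩
    rwa [invert_apply] at h
  · rintro ⟨m, hm, rfl⟩
    rwa [invert_apply, neg_neg]

lemma degP_invert (α : Lm p) : degP (invert α) = negT (degM α) := by
  rw [degP, support_invert, image_neg_max, degM]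

end Concrete

section Glue
variable {p : ℕ} [Fact p.Prime]

lemma degPLike : DegLike (degP : Lm p → WithBot ℤ) :=
  ⟨degP_eq_bot_iff, degP_one, degP_mul, degP_add_le⟩

lemma degMLike : DegLike (fun α : Lm p => degP (invert α)) := by
  constructor
  · intro a
    rw [degP_eq_bot_iff, map_eq_zero_iff _ (AlgEquiv.injective _)]
  · rw [map_one]; exact degP_one
  · intro a b; rw [map_mul]; exact degP_mul _ _
  · intro a b; rw [map_add]; exact degP_add_le _ _

lemma degM_lt_iff {α β : Lm p} :
    degM α < degM β ↔ degP (invert β) < degP (invert α) := by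
  rw [degP_invert, degP_invert, negT_lt_negT]

lemma expansive_iff_DCond {π : Polynomial (Lm p)} (hm : π.Monic) (hd : 1 ≤ π.natDegree) :
    ExpansivePoly π ↔
      (DCond degP π ∧ DCond (fun α : Lm p => degP (invert α)) π) := by
  constructor
  · rintro ⟨h0, ⟨hP0, hPi⟩, hM0, hMi⟩
    constructor
    · intro i hi
      rcases lt_trichotomy i π.natDegree with hlt | rfl | hgt
      · exact hPi i hi hlt
      · rw [hm.coeff_natDegree, degP_one]; exact hP0
      · rw [Polynomial.coeff_eq_zero_of_natDegree_lt hgt, (degP_eq_bot_iff _).2 rfl]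
        exact lt_trans (by exact WithBot.bot_lt_coe 0) hP0
    · intro i hi
      show degP (invert (π.coeff i)) < degP (invert (π.coeff 0))
      rw [← degM_lt_iff]
      rcases lt_trichotomy i π.natDegree with hlt | rfl | hgt
      · exact hMi i hi hlt
      · rw [hm.coeff_natDegree, degM_one]; exact hM0
      · rw [Polynomial.coeff_eq_zero_of_natDegree_lt hgt]
        have : degM (0 : Lm p) = ⊤ := by rw [degM, AddMonoidAlgebra.coeff_zero, Finsupp.support_zero, Finset.min_empty]
        rw [this]
        exact lt_of_lt_of_le hM0 le_top
  · rintro ⟨cP, cM⟩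
    have hP0 : (0 : WithBot ℤ) < degP (π.coeff 0) := by
      have := cP π.natDegree hd
      rwa [hm.coeff_natDegree, degP_one] at this
    have hM0 : degM (π.coeff 0) < 0 := by
      have := cM π.natDegree hd
      rw [show ((fun α : Lm p => degP (invert α)) (π.coeff π.natDegree) <
          (fun α : Lm p => degP (invert α)) (π.coeff 0)) =
          (degP (invert (π.coeff π.natDegree)) < degP (invert (π.coeff 0))) from rfl,
        ← degM_lt_iff] at this
      rwa [hm.coeff_natDegree, degM_one] at this
    refine ⟨?_, ⟨hP0, fun i hi _ => cP i hi⟩, hM0, fun i hi _ => ?_⟩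
    · intro hz
      rw [hz, (degP_eq_bot_iff _).2 rfl] at hP0
      simp at hP0
    · have := cM i hi
      rw [show ((fun α : Lm p => degP (invert α)) (π.coeff i) <
          (fun α : Lm p => degP (invert α)) (π.coeff 0)) =
          (degP (invert (π.coeff i)) < degP (invert (π.coeff 0))) from rfl,
        ← degM_lt_iff] at this
      exact this

end Glue

/-- Lemma `pura`: for monic polynomials `π, ρ, τ` over `𝕃 p` (each of
degree at least 1) with `π = ρ · τ`, `π` is expansive iff both `ρ` and `τ` are expansive. -/
theorem stmt0 (p : ℕ) (hp : p.Prime)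
    (π ρ τ : Polynomial (Lm p))
    (hπm : π.Monic) (hρm : ρ.Monic) (hτm : τ.Monic)
    (hπd : 1 ≤ π.natDegree) (hρd : 1 ≤ ρ.natDegree) (hτd : 1 ≤ τ.natDegree)
    (hmul : π = ρ * τ) :
    ExpansivePoly π ↔ (ExpansivePoly ρ ∧ ExpansivePoly τ) := by
  haveI : Fact p.Prime := ⟨hp⟩
  rw [expansive_iff_DCond hπm hπd, expansive_iff_DCond hρm hρd,
    expansive_iff_DCond hτm hτd, hmul,
    DCond.mul_iff degPLike hρm hτm hρd hτd, DCond.mul_iff degMLike hρm hτm hρd hτd]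
  tauto
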